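/- Let f be a Schur-convex function on probability distributions on k elements, let p be a probability distribution on k elements with non-increasingly ordered entries, and let δ ≥ 0. Then the steepest δ-approximation p̄^(δ) satisfies ‖p − p̄^(δ)‖ ≤ δ and f(q) ≤ f(p̄^(δ)) for every probability distribution q with ‖q − p‖ ≤ δ; that is, the smoothed maximum f̄^(δ)(p) = max_{‖q−p‖≤δ} f(q) is attained and equals f(p̄^(δ)). -/
import Mathlib


open Finset

noncomputable section

/-- The ℓ¹ distance `‖a − b‖ = Σᵢ |aᵢ − bᵢ|` between two vectors in `ℝ^k`. -/
def l1dist {k : ℕ} (a b : Fin k → ℝ) : ℝ := ∑ i, |a i - b i|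

/-- A probability distribution on `k` elements: nonnegative entries summing to 1. -/
def IsProbDist {k : ℕ} (p : Fin k → ℝ) : Prop := (∀ i, 0 ≤ p i) ∧ ∑ i, p i = 1

/-- The vector `a` rearranged in non-increasing order, `a↓`. -/
def descSort {k : ℕ} (a : Fin k → ℝ) : Fin k → ℝ := fun i => a (Tuple.sort a i.rev)

/-- The sum of the first `l` entries of `a` (1-based indexing: entries `1,…,l`). -/
def psum {k : ℕ} (a : Fin k → ℝ) (l : ℕ) : ℝ :=
  ∑ i ∈ univ.filter (fun i : Fin k => (i : ℕ) < l), a i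

/-- The sum of the entries of `a` from position `l` to `k` (1-based indexing). -/
def tailSum {k : ℕ} (a : Fin k → ℝ) (l : ℕ) : ℝ :=
  ∑ i ∈ univ.filter (fun i : Fin k => l ≤ (i : ℕ) + 1), a i

/-- `a` majorizes `b` (`a ≻ b`): the total sums agree and all partial sums of the
non-increasing rearrangements satisfy `Σ_{i=1}^l a↓ᵢ ≥ Σ_{i=1}^l b↓ᵢ` for `l = 1,…,k`. -/
def Majorizes {k : ℕ} (a b : Fin k → ℝ) : Prop :=
  (∑ i, a i = ∑ i, b i) ∧
  ∀ l : ℕ, 1 ≤ l → l ≤ k → psum (descSort b) l ≤ psum (descSort a) l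

/-- The distribution `e₁ = (1,0,…,0)`. -/
def e1 (k : ℕ) : Fin k → ℝ := fun i => if (i : ℕ) = 0 then 1 else 0

/-- The uniform distribution `η = (1/k,…,1/k)`. -/
def unif (k : ℕ) : Fin k → ℝ := fun _ => (k : ℝ)⁻¹

/-- The unnormalised vector `r` in the construction of the steepest approximation:
`r₁ = p₁ + δ/2`, `rᵢ = pᵢ` otherwise. -/
def steepR {k : ℕ} (δ : ℝ) (p : Fin k → ℝ) : Fin k → ℝ :=
  fun i => if (i : ℕ) = 0 then p i + δ / 2 else p i

/-- `lstar ∈ {1,…,k}` is the truncation index of the steepest `δ`-approximation of `p`: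
`Σ_{i=1}^{l*} rᵢ ≤ 1 < Σ_{i=1}^{l*+1} rᵢ` (the second sum being meaningful for `l* < k`). -/
def IsTruncIdx {k : ℕ} (δ : ℝ) (p : Fin k → ℝ) (lstar : ℕ) : Prop :=
  1 ≤ lstar ∧ lstar ≤ k ∧ psum (steepR δ p) lstar ≤ 1 ∧
    (lstar < k → 1 < psum (steepR δ p) (lstar + 1))

/-- `pbar` is the steepest `δ`-approximation `p̄^(δ)` of `p` (assumed non-increasingly
ordered): if `‖p − e₁‖ ≤ δ` then `pbar = e₁`; otherwise `pbar` agrees with `r` on the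
first `l*` entries, has `1 − Σ_{i=1}^{l*} rᵢ` at position `l*+1`, and `0` afterwards. -/
def IsSteepest {k : ℕ} (δ : ℝ) (p pbar : Fin k → ℝ) : Prop :=
  (l1dist p (e1 k) ≤ δ ∧ pbar = e1 k) ∨
  (δ < l1dist p (e1 k) ∧ ∃ lstar : ℕ, IsTruncIdx δ p lstar ∧
    ∀ i : Fin k, pbar i =
      if (i : ℕ) < lstar then steepR δ p i
      else if (i : ℕ) = lstar then 1 - psum (steepR δ p) lstar
      else 0)

/-- `ε(x) = Σ_{i : pᵢ ≥ x} (pᵢ − x)`. -/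
def epsFn {k : ℕ} (p : Fin k → ℝ) (x : ℝ) : ℝ :=
  ∑ i ∈ univ.filter (fun i : Fin k => x ≤ p i), (p i - x)

/-- `γ(y) = Σ_{i : pᵢ ≤ y} (y − pᵢ)`. -/
def gammaFn {k : ℕ} (p : Fin k → ℝ) (y : ℝ) : ℝ :=
  ∑ i ∈ univ.filter (fun i : Fin k => p i ≤ y), (y - p i)

/-- `pflat` is the flattest `δ`-approximation of `p` built from the cutting level `x*` and
the filling level `y*`: `x*, y* ∈ [0,1]`, `ε(x*) = γ(y*) = δ/2`, and `pflat` equals `x*`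
where `pᵢ ≥ x*`, equals `y*` where `pᵢ ≤ y*`, and equals `pᵢ` otherwise. -/
def IsFlattestWith {k : ℕ} (δ : ℝ) (p pflat : Fin k → ℝ) (x y : ℝ) : Prop :=
  x ∈ Set.Icc (0 : ℝ) 1 ∧ y ∈ Set.Icc (0 : ℝ) 1 ∧
  epsFn p x = δ / 2 ∧ gammaFn p y = δ / 2 ∧
  ∀ i : Fin k, pflat i = if x ≤ p i then x else if p i ≤ y then y else p i

/-- `pflat` is the flattest `δ`-approximation `p̲^(δ)` of `p` (assumed non-increasingly
ordered): if `‖p − η‖ ≤ δ` then `pflat = η`; otherwise it is obtained by cutting at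
level `x*` and filling at level `y*`. -/
def IsFlattest {k : ℕ} (δ : ℝ) (p pflat : Fin k → ℝ) : Prop :=
  (l1dist p (unif k) ≤ δ ∧ pflat = unif k) ∨
  (δ < l1dist p (unif k) ∧ ∃ x y : ℝ, IsFlattestWith δ p pflat x y)

end

section Aux

variable {k : ℕ}

private lemma psum_mono (a : Fin k → ℝ) (ha : ∀ i, 0 ≤ a i) {l m : ℕ} (h : l ≤ m) :
    psum a l ≤ psum a m := by
  apply Finset.sum_le_sum_of_subset_of_nonneg
  · intro i hi
    simp only [mem_filter, mem_univ, true_and] at hi ⊢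
    omega
  · intro i _ _; exact ha i

private lemma psum_k (a : Fin k → ℝ) : psum a k = ∑ i, a i := by
  unfold psum
  rw [Finset.filter_true_of_mem]
  intro i _; exact i.isLt

private lemma psum_le_total (a : Fin k → ℝ) (ha : ∀ i, 0 ≤ a i) (l : ℕ) :
    psum a l ≤ ∑ i, a i := by
  apply Finset.sum_le_sum_of_subset_of_nonneg (Finset.filter_subset _ _)
  intro i _ _; exact ha i

private lemma psum_succ (a : Fin k → ℝ) {l : ℕ} (h : l < k) :
    psum a (l + 1) = psum a l + a ⟨l, h⟩ := by
  unfold psum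
  have : (univ.filter (fun i : Fin k => (i : ℕ) < l + 1)) =
      insert (⟨l, h⟩ : Fin k) (univ.filter (fun i : Fin k => (i : ℕ) < l)) := by
    ext x
    simp only [mem_filter, mem_univ, true_and, mem_insert, Fin.ext_iff]
    omega
  rw [this, Finset.sum_insert (by simp)]
  ring

private lemma filter_lt_eq_map {l : ℕ} (h : l ≤ k) :
    univ.filter (fun i : Fin k => (i : ℕ) < l) =
      Finset.map (Fin.castLEEmb h) univ := by
  ext x
  simp only [mem_filter, mem_univ, true_and, Finset.mem_map]
  constructor
  · intro hx
    exact ⟨⟨(x : ℕ), hx⟩, rfl⟩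
  · rintro ⟨j, rfl⟩
    exact j.isLt

private lemma psum_eq_sum_fin (a : Fin k → ℝ) {l : ℕ} (h : l ≤ k) :
    psum a l = ∑ j : Fin l, a (Fin.castLE h j) := by
  unfold psum
  rw [filter_lt_eq_map h, Finset.sum_map]
  rfl

private lemma sum_descSort (a : Fin k → ℝ) : ∑ i, descSort a i = ∑ i, a i := by
  unfold descSort
  exact Equiv.sum_comp (Fin.revPerm.trans (Tuple.sort a)) a

private lemma descSort_eq_self {a : Fin k → ℝ} (ha : Antitone a) : descSort a = a := by
  have h1 : Monotone (a ∘ Fin.revPerm) := by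
    intro i j hij
    exact ha (by simpa using Fin.rev_le_rev.mpr hij)
  have key : a ∘ Tuple.sort a = a ∘ Fin.revPerm := by
    have h2 : ((a ∘ Fin.revPerm) ∘ (Fin.revPerm : Equiv.Perm (Fin k))) = a := by
      funext i; simp [Function.comp]
    calc a ∘ Tuple.sort a
        = ((a ∘ Fin.revPerm) ∘ (Fin.revPerm : Equiv.Perm (Fin k))) ∘
            Tuple.sort ((a ∘ Fin.revPerm) ∘ (Fin.revPerm : Equiv.Perm (Fin k))) := by
          rw [h2]
      _ = (a ∘ Fin.revPerm) ∘ Tuple.sort (a ∘ Fin.revPerm) :=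
          Tuple.comp_perm_comp_sort_eq_comp_sort
      _ = (a ∘ Fin.revPerm) ∘ Equiv.refl _ := by
          rw [Tuple.sort_eq_refl_iff_monotone.mpr h1]
      _ = a ∘ Fin.revPerm := by rfl
  funext i
  have : a (Tuple.sort a i.rev) = (a ∘ Tuple.sort a) i.rev := rfl
  rw [descSort, this, key]
  simp [Function.comp]

private lemma strictMono_nat_le {l : ℕ} (g : Fin l → ℕ) (hg : StrictMono g) :
    ∀ i : Fin l, (i : ℕ) ≤ g i := by
  intro i
  obtain ⟨i, hi⟩ := i
  induction i with
  | zero => exact Nat.zero_le _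
  | succ n ih =>
    have hn : n < l := by omega
    have h1 : (⟨n, hn⟩ : Fin l) < ⟨n + 1, hi⟩ := by simp [Fin.lt_def]
    have h2 : g ⟨n, hn⟩ < g ⟨n + 1, hi⟩ := hg h1
    have h3 : n ≤ g ⟨n, hn⟩ := ih hn
    have h4 : ((⟨n + 1, hi⟩ : Fin l) : ℕ) = n + 1 := rfl
    omega

private lemma sum_subset_le_psum (p : Fin k → ℝ) (hord : Antitone p)
    (S : Finset (Fin k)) {l : ℕ} (hl : l ≤ k) (hcard : S.card = l) :
    ∑ i ∈ S, p i ≤ psum p l := by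
  have hS : S = Finset.map (S.orderEmbOfFin hcard).toEmbedding univ := by
    ext x
    simp only [Finset.mem_map, Finset.mem_univ, true_and, RelEmbedding.coe_toEmbedding]
    constructor
    · intro hx
      have : x ∈ Set.range (S.orderEmbOfFin hcard) := by
        rw [Finset.range_orderEmbOfFin]; exact hx
      exact this
    · rintro ⟨j, rfl⟩
      exact Finset.orderEmbOfFin_mem S hcard j
  rw [hS, Finset.sum_map, psum_eq_sum_fin p hl]
  apply Finset.sum_le_sum
  intro j _
  apply hord
  rw [Fin.le_def]
  exact strictMono_nat_le (fun i => ((S.orderEmbOfFin hcard) i : ℕ))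
    (Fin.val_strictMono.comp (S.orderEmbOfFin hcard).strictMono) j

private lemma sum_abs_eq_two_mul_max {d : Fin k → ℝ} (h : ∑ i, d i = 0) :
    ∑ i, |d i| = 2 * ∑ i, max (d i) 0 := by
  have : ∀ i : Fin k, |d i| = 2 * max (d i) 0 - d i := by
    intro i
    rcases le_total 0 (d i) with h' | h'
    · rw [abs_of_nonneg h', max_eq_left h']; ring
    · rw [abs_of_nonpos h', max_eq_right h']; ring
  calc ∑ i, |d i| = ∑ i, (2 * max (d i) 0 - d i) := Finset.sum_congr rfl fun i _ => this i
    _ = 2 * ∑ i, max (d i) 0 - ∑ i, d i := by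
        rw [Finset.sum_sub_distrib, Finset.mul_sum]
    _ = 2 * ∑ i, max (d i) 0 := by rw [h]; ring

private lemma psum_descSort_le_one {q : Fin k → ℝ} (hq : IsProbDist q) (l : ℕ) :
    psum (descSort q) l ≤ 1 := by
  have h1 : ∀ i, 0 ≤ descSort q i := fun i => hq.1 _
  calc psum (descSort q) l ≤ ∑ i, descSort q i := psum_le_total _ h1 l
    _ = ∑ i, q i := sum_descSort q
    _ = 1 := hq.2

private lemma psum_descSort_le {q p : Fin k → ℝ} (hq : IsProbDist q) (hp : IsProbDist p)
    (hord : Antitone p) {δ : ℝ} (hqp : l1dist q p ≤ δ) {l : ℕ} (hl : l ≤ k) :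
    psum (descSort q) l ≤ psum p l + δ / 2 := by
  set π : Equiv.Perm (Fin k) := Fin.revPerm.trans (Tuple.sort q) with hπ
  have hds : ∀ i : Fin k, descSort q i = q (π i) := fun i => rfl
  set F := univ.filter (fun i : Fin k => (i : ℕ) < l) with hF
  set S := F.image π with hSdef
  have hcardF : F.card = l := by
    rw [hF, filter_lt_eq_map hl, Finset.card_map, Finset.card_univ, Fintype.card_fin]
  have hcardS : S.card = l := by
    rw [hSdef, Finset.card_image_of_injective _ π.injective, hcardF]
  have h1 : psum (descSort q) l = ∑ i ∈ S, q i := by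
    rw [psum, ← hF, hSdef, Finset.sum_image (fun a _ b _ h => π.injective h)]
    exact Finset.sum_congr rfl fun i _ => hds i
  have hsum0 : ∑ i, (q i - p i) = 0 := by
    rw [Finset.sum_sub_distrib, hq.2, hp.2]; ring
  have hmax : ∑ i, max (q i - p i) 0 ≤ δ / 2 := by
    have := sum_abs_eq_two_mul_max hsum0
    have habs : ∑ i, |q i - p i| ≤ δ := hqp
    linarith
  calc psum (descSort q) l = ∑ i ∈ S, q i := h1
    _ = ∑ i ∈ S, p i + ∑ i ∈ S, (q i - p i) := by rw [← Finset.sum_add_distrib]; ring_nf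
    _ ≤ psum p l + ∑ i ∈ S, max (q i - p i) 0 :=
        add_le_add (sum_subset_le_psum p hord S hl hcardS)
          (Finset.sum_le_sum fun i _ => le_max_left _ _)
    _ ≤ psum p l + ∑ i, max (q i - p i) 0 := by
        have h2 : ∑ i ∈ S, max (q i - p i) 0 ≤ ∑ i, max (q i - p i) 0 :=
          Finset.sum_le_sum_of_subset_of_nonneg (Finset.subset_univ S)
            (fun i _ _ => le_max_right _ _)
        linarith
    _ ≤ psum p l + δ / 2 := by linarith

private lemma sum_ite_eq_zero (s : Finset (Fin k)) (a : Fin k) (c : ℝ) (ha : a ∈ s) :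
    ∑ i ∈ s, (if i = a then c else 0) = c := by
  rw [Finset.sum_ite_eq' s a (fun _ => c)]
  simp [ha]

end Aux

/-- for a Schur-convex `f`, the smoothed maximum
`f̄^(δ)(p) = max_{‖q−p‖≤δ} f(q)` is attained at the steepest `δ`-approximation `p̄^(δ)`. -/
theorem schurConvex_smooth_max {k : ℕ} (f : (Fin k → ℝ) → ℝ)
    (hf : ∀ a b : Fin k → ℝ, IsProbDist a → IsProbDist b → Majorizes a b → f b ≤ f a)
    (δ : ℝ) (hδ : 0 ≤ δ)
    (p : Fin k → ℝ) (hp : IsProbDist p) (hord : Antitone p)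
    (pbar : Fin k → ℝ) (hpbar : IsSteepest δ p pbar) :
    IsProbDist pbar ∧ l1dist p pbar ≤ δ ∧
      ∀ q : Fin k → ℝ, IsProbDist q → l1dist q p ≤ δ → f q ≤ f pbar := by
  obtain ⟨hle, he⟩ | ⟨hgt, lstar, ⟨hl1, hlk, hle1, hlt⟩, hdef⟩ := hpbar
  · -- Case 1: pbar = e1 k
    subst he
    have hk : 0 < k := by
      rcases Nat.eq_zero_or_pos k with h | h
      · exfalso; subst h; simpa using hp.2
      · exact h
    have he1sum : ∑ i, e1 k i = 1 := by
      have h1 : ∀ i : Fin k, e1 k i = if i = ⟨0, hk⟩ then (1 : ℝ) else 0 := by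
        intro i; simp only [e1]
        by_cases h : (i : ℕ) = 0 <;> simp [h, Fin.ext_iff]
      rw [Finset.sum_congr rfl (fun i _ => h1 i)]
      exact sum_ite_eq_zero univ ⟨0, hk⟩ 1 (mem_univ _)
    have he1prob : IsProbDist (e1 k) := by
      refine ⟨fun i => ?_, he1sum⟩
      simp only [e1]; split <;> norm_num
    have he1anti : Antitone (e1 k) := by
      intro i j hij
      have hv : (i : ℕ) ≤ (j : ℕ) := hij
      simp only [e1]
      split_ifs with h1 h2 h3
      · exact le_refl _
      · exact absurd (by omega : (i : ℕ) = 0) h2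
      · norm_num
      · exact le_refl _
    refine ⟨he1prob, hle, ?_⟩
    intro q hq hqp
    apply hf _ _ he1prob hq
    constructor
    · rw [he1sum, hq.2]
    · intro l h1l hlk
      rw [descSort_eq_self he1anti]
      have h2 : psum (e1 k) l = 1 := by
        unfold psum
        have h1 : ∀ i ∈ univ.filter (fun i : Fin k => (i : ℕ) < l),
            e1 k i = if i = ⟨0, hk⟩ then (1 : ℝ) else 0 := by
          intro i _; simp only [e1]
          by_cases h : (i : ℕ) = 0 <;> simp [h, Fin.ext_iff]
        rw [Finset.sum_congr rfl h1]
        refine sum_ite_eq_zero _ ⟨0, hk⟩ 1 ?_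
        simp only [mem_filter, mem_univ, true_and]
        omega
      rw [h2]
      exact psum_descSort_le_one hq l
  · -- Case 2
    have hk : 0 < k := lt_of_lt_of_le hl1 hlk
    set r := steepR δ p with hr
    have hrnn : ∀ i, 0 ≤ r i := by
      intro i; simp only [hr, steepR]
      split
      · linarith [hp.1 i]
      · exact hp.1 i
    have hrsum : ∀ l : ℕ, 1 ≤ l → psum r l = psum p l + δ / 2 := by
      intro l h1l
      unfold psum
      have h1 : ∀ i ∈ univ.filter (fun i : Fin k => (i : ℕ) < l),
          r i = p i + (if i = ⟨0, hk⟩ then δ / 2 else 0) := by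
        intro i _; simp only [hr, steepR]
        by_cases h : (i : ℕ) = 0 <;> simp [h, Fin.ext_iff]
      rw [Finset.sum_congr rfl h1, Finset.sum_add_distrib,
        sum_ite_eq_zero _ ⟨0, hk⟩ _ (by simp only [mem_filter, mem_univ, true_and]; omega)]
    have hpb_lt : ∀ i : Fin k, (i : ℕ) < lstar → pbar i = r i := fun i h => by
      rw [hdef i, if_pos h]
    have hpb_eq : ∀ i : Fin k, (i : ℕ) = lstar → pbar i = 1 - psum r lstar := fun i h => by
      rw [hdef i, if_neg (by omega), if_pos h]
    have hpb_gt : ∀ i : Fin k, lstar < (i : ℕ) → pbar i = 0 := fun i h => by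
      rw [hdef i, if_neg (by omega), if_neg (by omega)]
    have hkey : ∀ h' : lstar < k, 1 - psum r lstar < p ⟨lstar, h'⟩ := by
      intro h'
      have h2 := hlt h'
      have h3 : psum r (lstar + 1) = psum r lstar + r ⟨lstar, h'⟩ := psum_succ r h'
      have h4 : r ⟨lstar, h'⟩ = p ⟨lstar, h'⟩ := by
        simp only [hr, steepR]
        rw [if_neg (by omega)]
      rw [h3, h4] at h2
      linarith
    have hpbnn : ∀ i, 0 ≤ pbar i := by
      intro i
      rcases lt_trichotomy ((i : ℕ)) lstar with h | h | h
      · rw [hpb_lt i h]; exact hrnn i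
      · rw [hpb_eq i h]; linarith [hle1]
      · rw [hpb_gt i h]
    have hpsum_pb_le : ∀ l : ℕ, l ≤ lstar → psum pbar l = psum r l := by
      intro l hl
      unfold psum
      apply Finset.sum_congr rfl
      intro i hi
      simp only [mem_filter, mem_univ, true_and] at hi
      exact hpb_lt i (by omega)
    have hpsum_pb_one : ∀ l : ℕ, lstar < l → l ≤ k → psum pbar l = 1 := by
      intro l hl hlk'
      induction l, hl using Nat.le_induction with
      | base =>
        have hlt' : lstar < k := by omega
        rw [psum_succ pbar hlt', hpsum_pb_le lstar le_rfl, hpb_eq ⟨lstar, hlt'⟩ rfl]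
        ring
      | succ n hn ih =>
        have hnk : n < k := by omega
        rw [psum_succ pbar hnk, ih (by omega), hpb_gt ⟨n, hnk⟩ (by simpa using hn)]
        ring
    have hsum_pb : ∑ i, pbar i = 1 := by
      rw [← psum_k pbar]
      rcases lt_or_eq_of_le hlk with h | h
      · exact hpsum_pb_one k h le_rfl
      · have h1 : psum pbar k = psum r k := hpsum_pb_le k (le_of_eq h.symm)
        have h2 : psum r k = 1 + δ / 2 := by
          rw [hrsum k (by omega), psum_k p, hp.2]
        have h3 : psum r k ≤ 1 := h ▸ hle1
        rw [h1, h2]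
        linarith
    have hpbprob : IsProbDist pbar := ⟨hpbnn, hsum_pb⟩
    have hdist : l1dist p pbar ≤ δ := by
      have hd0 : ∑ i, (pbar i - p i) = 0 := by
        rw [Finset.sum_sub_distrib, hsum_pb, hp.2]; ring
      have habs : l1dist p pbar = ∑ i, |pbar i - p i| :=
        Finset.sum_congr rfl fun i _ => abs_sub_comm _ _
      have hmax : ∀ i : Fin k, max (pbar i - p i) 0 = if i = ⟨0, hk⟩ then δ / 2 else 0 := by
        intro i
        by_cases h0 : i = ⟨0, hk⟩
        · subst h0
          have h5 : pbar ⟨0, hk⟩ - p ⟨0, hk⟩ = δ / 2 := by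
            rw [hpb_lt _ (by show (0 : ℕ) < lstar; omega)]
            have h6 : r ⟨0, hk⟩ = p ⟨0, hk⟩ + δ / 2 := by simp [hr, steepR]
            rw [h6]; ring
          rw [if_pos rfl, h5]
          exact max_eq_left (by linarith)
        · rw [if_neg h0]
          have hne : (i : ℕ) ≠ 0 := by simpa [Fin.ext_iff] using h0
          rcases lt_trichotomy ((i : ℕ)) lstar with h | h | h
          · rw [hpb_lt i h]
            simp only [hr, steepR]
            rw [if_neg hne]
            simp
          · have h' : lstar < k := by have := i.isLt; omega
            have hkey' := hkey h'
            have hi : i = ⟨lstar, h'⟩ := by ext; simpa using h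
            rw [hpb_eq i h]
            apply max_eq_right
            rw [hi]
            linarith
          · rw [hpb_gt i h]
            exact max_eq_right (by linarith [hp.1 i])
      have : l1dist p pbar = δ := by
        calc l1dist p pbar = ∑ i, |pbar i - p i| := habs
          _ = 2 * ∑ i, max (pbar i - p i) 0 := sum_abs_eq_two_mul_max hd0
          _ = 2 * (δ / 2) := by
              rw [Finset.sum_congr rfl fun i _ => hmax i,
                sum_ite_eq_zero univ ⟨0, hk⟩ _ (mem_univ _)]
          _ = δ := by ring
      linarith
    have hpbanti : Antitone pbar := by
      intro i j hij
      have hvij : (i : ℕ) ≤ (j : ℕ) := hij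
      rcases lt_trichotomy ((j : ℕ)) lstar with hj | hj | hj
      · rw [hpb_lt j hj, hpb_lt i (by omega)]
        simp only [hr, steepR]
        split_ifs with h1 h2 h3
        · linarith [hord hij]
        · exact absurd (by omega : (i : ℕ) = 0) h2
        · linarith [hord hij]
        · exact hord hij
      · have h' : lstar < k := by have := j.isLt; omega
        rw [hpb_eq j hj]
        by_cases hi : (i : ℕ) < lstar
        · rw [hpb_lt i hi]
          have h2 := hkey h'
          have h3 : p ⟨lstar, h'⟩ ≤ p i := hord (by rw [Fin.le_def]; simp; omega)
          have h4 : p i ≤ r i := by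
            simp only [hr, steepR]
            split
            · linarith
            · exact le_refl _
          linarith
        · have hi' : (i : ℕ) = lstar := by omega
          rw [hpb_eq i hi']
      · rw [hpb_gt j hj]
        exact hpbnn i
    refine ⟨hpbprob, hdist, ?_⟩
    intro q hq hqp
    apply hf _ _ hpbprob hq
    constructor
    · rw [hsum_pb, hq.2]
    · intro l h1l hlk'
      rw [descSort_eq_self hpbanti]
      by_cases hcase : l ≤ lstar
      · have h5 : psum pbar l = psum p l + δ / 2 := by
          rw [hpsum_pb_le l hcase, hrsum l h1l]
        rw [h5]
        exact psum_descSort_le hq hp hord hqp hlk'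
      · rw [hpsum_pb_one l (by omega) hlk']
        exact psum_descSort_le_one hq l
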